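/- Let 0 < ε_1 < … < ε_m be tolerances, let w_1, …, w_m ≥ 0 be real weights, and let c_w be the weighted cost values. Then the minimum, over all ε_m-simplifications π, of the sum over the edges (x,y) of π of c_w(m,(x,y)) equals the minimum, over all progressive simplifications S_1, …, S_m for ε_1 < … < ε_m, of Σ_{k=1}^m w_k·(|S_k| − 1). Consequently, the minimum of the weighted cumulative size Σ_{k=1}^m w_k·|S_k| over progressive simplifications equals Σ_{k=1}^m w_k plus the minimum c_w(m,·)-cost of an ε_m-simplification. -/

import Mathlib

open Metric

noncomputable section

/-- The Euclidean plane. -/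
abbrev Pt : Type := EuclideanSpace ℝ (Fin 2)

/-- The subcurve `⟨p i, …, p j⟩`: the union of the segments between consecutive vertices. -/
def subcurve {n : ℕ} (p : Fin n → Pt) (i j : Fin n) : Set Pt :=
  ⋃ (t : Fin n) (_ : i ≤ t ∧ t < j) (h : (t : ℕ) + 1 < n),
    segment ℝ (p t) (p ⟨(t : ℕ) + 1, h⟩)

/-- The (Hausdorff-distance) error of the shortcut `(i, j)`. -/
def err {n : ℕ} (p : Fin n → Pt) (i j : Fin n) : ℝ :=
  Metric.hausdorffDist (segment ℝ (p i) (p j)) (subcurve p i j)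

/-- The edges (consecutive pairs) of a path given as a list of vertices. -/
def edges {n : ℕ} (l : List (Fin n)) : List (Fin n × Fin n) := l.zip l.tail

/-- `l` is a path from `i` to `j` at tolerance `ε`: a strictly increasing sequence of
indices starting at `i`, ending at `j`, all of whose edges are valid shortcuts for `ε`. -/
def IsPath {n : ℕ} (p : Fin n → Pt) (ε : ℝ) (i j : Fin n) (l : List (Fin n)) : Prop :=
  l.Chain' (· < ·) ∧ l.head? = some i ∧ l.getLast? = some j ∧
    ∀ e ∈ edges l, err p e.1 e.2 ≤ ε

/-- The cost of a path: the sum of the costs of its edges. -/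
def pathCost {n : ℕ} {α : Type*} [AddCommMonoid α] (c : Fin n → Fin n → α)
    (l : List (Fin n)) : α :=
  ((edges l).map (fun e => c e.1 e.2)).sum

/-- Minimum cost (natural-valued) of a path from `i` to `j` at tolerance `ε`. -/
def minCost {n : ℕ} (p : Fin n → Pt) (ε : ℝ) (c : Fin n → Fin n → ℕ) (i j : Fin n) : ℕ :=
  sInf {s : ℕ | ∃ l, IsPath p ε i j l ∧ pathCost c l = s}

/-- Minimum cost (real-valued) of a path from `i` to `j` at tolerance `ε`. -/
def minCostR {n : ℕ} (p : Fin n → Pt) (ε : ℝ) (c : Fin n → Fin n → ℝ) (i j : Fin n) : ℝ :=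
  sInf {s : ℝ | ∃ l, IsPath p ε i j l ∧ pathCost c l = s}

/-- `l` is a minimum-cost path from `i` to `j` at tolerance `ε` w.r.t. cost `c`. -/
def IsMinPath {n : ℕ} (p : Fin n → Pt) (ε : ℝ) (c : Fin n → Fin n → ℕ) (i j : Fin n)
    (l : List (Fin n)) : Prop :=
  IsPath p ε i j l ∧ ∀ l', IsPath p ε i j l' → pathCost c l ≤ pathCost c l'

/-- `L'` is obtained from `L` by replacing each edge `(i, j)` of `L` by a minimum-cost
path from `i` to `j` at tolerance `ε`, and concatenating. -/
def Refines {n : ℕ} (p : Fin n → Pt) (ε : ℝ) (c : Fin n → Fin n → ℕ)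
    (L L' : List (Fin n)) : Prop :=
  ∃ f : Fin n × Fin n → List (Fin n),
    (∀ e ∈ edges L, IsMinPath p ε c e.1 e.2 (f e)) ∧
    L' = L.take 1 ++ ((edges L).map (fun e => (f e).tail)).flatten

/-- `S 1, …, S m` is a progressive simplification for the tolerances `ε 1 < … < ε m`:
each `S k` is an `ε k`-simplification (a path from `v0` to `v1`), and every vertex of
`S (k+1)` is a vertex of `S k`. -/
def ProgSimp {n : ℕ} (p : Fin n → Pt) (m : ℕ) (ε : ℕ → ℝ) (v0 v1 : Fin n)
    (S : ℕ → List (Fin n)) : Prop :=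
  (∀ k, 1 ≤ k → k ≤ m → IsPath p (ε k) v0 v1 (S k)) ∧
  (∀ k, 1 ≤ k → k < m → ∀ v ∈ S (k + 1), v ∈ S k)

namespace PAux

variable {n : ℕ}

@[simp] lemma edges_nil : edges ([] : List (Fin n)) = [] := rfl
@[simp] lemma edges_single (a : Fin n) : edges [a] = [] := rfl
@[simp] lemma edges_cons_cons (a b : Fin n) (l : List (Fin n)) :
    edges (a :: b :: l) = (a, b) :: edges (b :: l) := rfl

@[simp] lemma pathCost_nil {α : Type*} [AddCommMonoid α] (c : Fin n → Fin n → α) :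
    pathCost c ([] : List (Fin n)) = 0 := rfl
@[simp] lemma pathCost_single {α : Type*} [AddCommMonoid α] (c : Fin n → Fin n → α) (a : Fin n) :
    pathCost c [a] = 0 := rfl
@[simp] lemma pathCost_cons_cons {α : Type*} [AddCommMonoid α] (c : Fin n → Fin n → α)
    (a b : Fin n) (l : List (Fin n)) :
    pathCost c (a :: b :: l) = c a b + pathCost c (b :: l) := rfl

lemma edges_append : ∀ (l1 : List (Fin n)) (x : Fin n) (t : List (Fin n)),
    l1.getLast? = some x → edges (l1 ++ t) = edges l1 ++ edges (x :: t)
  | [], x, t, h => by simp at h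
  | [a], x, t, h => by
      simp only [List.getLast?_singleton, Option.some.injEq] at h
      subst h; simp [edges]
  | a :: b :: l1, x, t, h => by
      rw [List.getLast?_cons_cons] at h
      have := edges_append (b :: l1) x t h
      simp only [List.cons_append, edges_cons_cons] at *
      rw [this]

lemma pathCost_append {α : Type*} [AddCommMonoid α] (c : Fin n → Fin n → α)
    {l1 : List (Fin n)} {x : Fin n} (t : List (Fin n)) (h : l1.getLast? = some x) :
    pathCost c (l1 ++ t) = pathCost c l1 + pathCost c (x :: t) := by
  unfold pathCost
  rw [edges_append l1 x t h, List.map_append, List.sum_append]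

lemma edges_length : ∀ (l : List (Fin n)), (edges l).length = l.length - 1 := by
  intro l
  simp only [edges, List.length_zip, List.length_tail]
  omega

lemma le_getLast : ∀ (l : List (Fin n)), l.Chain' (· < ·) → ∀ z, l.getLast? = some z →
    ∀ v ∈ l, v ≤ z
  | [], _, z, h => by simp at h
  | [a], _, z, h => by
      simp only [List.getLast?_singleton, Option.some.injEq] at h
      subst h; simp
  | a :: b :: l, hc, z, h => by
      rw [List.getLast?_cons_cons] at h
      obtain ⟨hab, hc'⟩ := List.isChain_cons_cons.mp hc
      intro v hv
      rcases List.mem_cons.mp hv with rfl | hv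
      · exact le_of_lt (lt_of_lt_of_le hab (le_getLast (b :: l) hc' z h b (by simp)))
      · exact le_getLast (b :: l) hc' z h v hv

lemma head_le : ∀ (l : List (Fin n)), l.Chain' (· < ·) → ∀ x, l.head? = some x →
    ∀ v ∈ l, x ≤ v
  | [], _, x, h => by simp at h
  | a :: l, hc, x, h => by
      simp only [List.head?_cons, Option.some.injEq] at h
      subst h
      intro v hv
      rcases List.mem_cons.mp hv with rfl | hv
      · exact le_rfl
      · exact le_of_lt (List.rel_of_pairwise_cons (List.isChain_iff_pairwise.mp hc) hv)

lemma mem_of_getLast?' {l : List (Fin n)} {x : Fin n} (h : l.getLast? = some x) : x ∈ l := by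
  obtain ⟨h', rfl⟩ := List.mem_getLast?_eq_getLast (l := l) (x := x) h
  exact List.getLast_mem h'

lemma mem_of_head?' {l : List (Fin n)} {x : Fin n} (h : l.head? = some x) : x ∈ l := by
  cases l with
  | nil => simp at h
  | cons a t => simp only [List.head?_cons, Option.some.injEq] at h; subst h; simp

lemma eq_single (l : List (Fin n)) (hc : l.Chain' (· < ·)) (x : Fin n)
    (hh : l.head? = some x) (hl : l.getLast? = some x) : l = [x] := by
  match l with
  | [] => simp at hh
  | [a] => simp_all
  | a :: b :: t =>
      simp only [List.head?_cons, Option.some.injEq] at hh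
      rw [List.getLast?_cons_cons] at hl
      obtain ⟨hab, hc'⟩ := List.isChain_cons_cons.mp hc
      have h1 : b ≤ x := head_le (b :: t) hc' b rfl x (mem_of_getLast?' hl)
      subst hh
      exact absurd (lt_of_lt_of_le hab h1) (lt_irrefl a)

lemma err_consec (p : Fin n → Pt) (i : Fin n) (h : (i : ℕ) + 1 < n) :
    err p i ⟨(i : ℕ) + 1, h⟩ = 0 := by
  have hsub : subcurve p i ⟨(i : ℕ) + 1, h⟩ = segment ℝ (p i) (p ⟨(i : ℕ) + 1, h⟩) := by
    apply subset_antisymm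
    · apply Set.iUnion_subset; intro t
      apply Set.iUnion_subset; intro ht
      apply Set.iUnion_subset; intro ht'
      have : t = i := by
        obtain ⟨h1, h2⟩ := ht
        have h1' : (i : ℕ) ≤ (t : ℕ) := h1
        have h2' : (t : ℕ) < (i : ℕ) + 1 := h2
        exact Fin.ext (by omega)
      subst this
      exact subset_of_eq rfl
    · intro x hx
      refine Set.mem_iUnion.mpr ⟨i, Set.mem_iUnion.mpr ⟨⟨le_refl i, ?_⟩, Set.mem_iUnion.mpr ⟨h, hx⟩⟩⟩
      exact Fin.mk_lt_mk.mpr (by omega) |>.trans_le (le_refl _) |>.trans_eq rfl |> fun h' => h'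
  rw [err, hsub]
  exact Metric.hausdorffDist_self_zero

lemma consec_path (p : Fin n → Pt) : ∀ (d : ℕ) (i j : Fin n), (j : ℕ) - (i : ℕ) = d → i ≤ j →
    ∃ l : List (Fin n), l.Chain' (· < ·) ∧ l.head? = some i ∧ l.getLast? = some j ∧
      ∀ e ∈ edges l, err p e.1 e.2 = 0 := by
  intro d
  induction d with
  | zero =>
      intro i j hd hij
      have : i = j := Fin.ext (by omega)
      subst this
      exact ⟨[i], List.isChain_singleton i, rfl, rfl, by simp⟩
  | succ d ih =>
      intro i j hd hij
      have hlt : (i : ℕ) + 1 < n := by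
        have := j.isLt; omega
      set i' : Fin n := ⟨(i : ℕ) + 1, hlt⟩ with hi'
      have hij' : i' ≤ j := by
        simp only [Fin.le_def, hi']; omega
      obtain ⟨l, hc, hh, hl, he⟩ := ih i' j (by simp [hi']; omega) hij'
      obtain ⟨t, rfl⟩ : ∃ t, l = i' :: t := by
        cases l with
        | nil => simp at hh
        | cons a t => simp only [List.head?_cons, Option.some.injEq] at hh; exact ⟨t, by rw [hh]⟩
      refine ⟨i :: i' :: t, ?_, rfl, ?_, ?_⟩
      · exact List.isChain_cons_cons.mpr ⟨Fin.mk_lt_mk.mpr (by omega), hc⟩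
      · rw [List.getLast?_cons_cons]; exact hl
      · intro e hee
        rw [edges_cons_cons] at hee
        rcases List.mem_cons.mp hee with rfl | hee
        · exact err_consec p i hlt
        · exact he e hee

lemma isPath_of_consec (p : Fin n → Pt) {ε : ℝ} (hε : 0 ≤ ε) (i j : Fin n) (hij : i ≤ j) :
    ∃ l, IsPath p ε i j l := by
  obtain ⟨l, hc, hh, hl, he⟩ := consec_path p ((j : ℕ) - (i : ℕ)) i j rfl hij
  exact ⟨l, hc, hh, hl, fun e hee => (he e hee).le.trans hε⟩

lemma costSet_finite (p : Fin n → Pt) (ε : ℝ) (c : Fin n → Fin n → ℝ) (i j : Fin n) :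
    {s : ℝ | ∃ l, IsPath p ε i j l ∧ pathCost c l = s}.Finite := by
  have hsub : {s : ℝ | ∃ l, IsPath p ε i j l ∧ pathCost c l = s} ⊆
      (fun l : List (Fin n) => pathCost c l) '' {l : List (Fin n) | l.length ≤ n} := by
    rintro s ⟨l, hl, rfl⟩
    refine ⟨l, ?_, rfl⟩
    have hnd : l.Nodup := (List.isChain_iff_pairwise.mp hl.1).imp ne_of_lt
    simpa using hnd.length_le_card
  exact (((List.finite_length_le (Fin n) n)).image _).subset hsub

lemma minCostR_le (p : Fin n → Pt) (ε : ℝ) (c : Fin n → Fin n → ℝ) {i j : Fin n}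
    {l : List (Fin n)} (h : IsPath p ε i j l) : minCostR p ε c i j ≤ pathCost c l :=
  csInf_le (costSet_finite p ε c i j).bddBelow ⟨l, h, rfl⟩

lemma minCostR_attained (p : Fin n → Pt) (ε : ℝ) (c : Fin n → Fin n → ℝ) {i j : Fin n}
    (h : ∃ l, IsPath p ε i j l) :
    ∃ l, IsPath p ε i j l ∧ pathCost c l = minCostR p ε c i j := by
  obtain ⟨l0, hl0⟩ := h
  have hne : {s : ℝ | ∃ l, IsPath p ε i j l ∧ pathCost c l = s}.Nonempty :=
    ⟨pathCost c l0, l0, hl0, rfl⟩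
  exact hne.csInf_mem (costSet_finite p ε c i j)

lemma glue_isPath {p : Fin n → Pt} {ε : ℝ} {i x j : Fin n} {l1 l2 : List (Fin n)}
    (h1 : IsPath p ε i x l1) (h2 : IsPath p ε x j l2) :
    IsPath p ε i j (l1 ++ l2.tail) ∧
    edges (l1 ++ l2.tail) = edges l1 ++ edges l2 ∧
    ∀ v, (v ∈ l1 ∨ v ∈ l2) → v ∈ l1 ++ l2.tail := by
  obtain ⟨hc1, hh1, hl1, he1⟩ := h1
  obtain ⟨hc2, hh2, hl2, he2⟩ := h2
  obtain ⟨t2, rfl⟩ : ∃ t2, l2 = x :: t2 := by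
    cases l2 with
    | nil => simp at hh2
    | cons a t => simp only [List.head?_cons, Option.some.injEq] at hh2; exact ⟨t, by rw [hh2]⟩
  have hedges : edges (l1 ++ (x :: t2).tail) = edges l1 ++ edges (x :: t2) := by
    simpa using edges_append l1 x t2 hl1
  obtain ⟨t1, rfl⟩ : ∃ t1, l1 = i :: t1 := by
    cases l1 with
    | nil => simp at hh1
    | cons a t => simp only [List.head?_cons, Option.some.injEq] at hh1; exact ⟨t, by rw [hh1]⟩
  refine ⟨⟨?_, ?_, ?_, ?_⟩, hedges, ?_⟩
  · change List.IsChain _ _ at hc1 hc2 ⊢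
    rw [List.isChain_append]
    refine ⟨hc1, hc2.tail, ?_⟩
    intro a ha b hb
    rw [hl1] at ha
    simp only [Option.mem_def, Option.some.injEq] at ha
    subst ha
    cases t2 with
    | nil => simp at hb
    | cons b' t2' =>
        simp only [List.tail_cons, List.head?_cons, Option.mem_def, Option.some.injEq] at hb
        subst hb
        exact (List.isChain_cons_cons.mp hc2).1
  · simp
  · cases t2 with
    | nil => simpa using hl1.trans hl2
    | cons b' t2' =>
        rw [List.tail_cons, List.getLast?_append_of_ne_nil _ (by simp)]
        rw [List.getLast?_cons_cons] at hl2
        exact hl2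
  · rw [hedges]
    intro e he
    rcases List.mem_append.mp he with h | h
    · exact he1 e h
    · exact he2 e h
  · intro v hv
    rcases hv with hv | hv
    · exact List.mem_append_left _ hv
    · rcases List.mem_cons.mp hv with rfl | hv
      · exact List.mem_append_left _ (mem_of_getLast?' hl1)
      · exact List.mem_append_right _ (by simpa using hv)

/-- Replacing every edge of a path by a min-cost path at tolerance ε. -/
lemma refine_exists (p : Fin n → Pt) (ε : ℝ) (c : Fin n → Fin n → ℝ) :
    ∀ (L : List (Fin n)) (i j : Fin n),
    L.Chain' (· < ·) → L.head? = some i → L.getLast? = some j →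
    (∀ e ∈ edges L, ∃ l, IsPath p ε e.1 e.2 l) →
    ∃ L', IsPath p ε i j L' ∧ (∀ v ∈ L, v ∈ L') ∧
      pathCost c L' = ((edges L).map (fun e => minCostR p ε c e.1 e.2)).sum
  | [], i, j, hc, hh, hl, hex => by simp at hh
  | [a], i, j, hc, hh, hl, hex => by
      simp only [List.head?_cons, Option.some.injEq] at hh
      simp only [List.getLast?_singleton, Option.some.injEq] at hl
      exact ⟨[a], ⟨List.isChain_singleton a, by simp [hh], by simp [hl], by simp⟩, by simp, by simp⟩
  | a :: b :: t, i, j, hc, hh, hl, hex => by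
      simp only [List.head?_cons, Option.some.injEq] at hh
      subst hh
      rw [List.getLast?_cons_cons] at hl
      obtain ⟨hab, hc'⟩ := List.isChain_cons_cons.mp hc
      obtain ⟨l0, hl0, hl0c⟩ := minCostR_attained p ε c
        (hex (a, b) (by simp))
      obtain ⟨L'', hL'', hmem'', hcost''⟩ := refine_exists p ε c (b :: t) b j hc' rfl hl
        (fun e hee => hex e (by rw [edges_cons_cons]; exact List.mem_cons_of_mem _ hee))
      obtain ⟨hpath, hedges, hmem⟩ := glue_isPath hl0 hL''
      refine ⟨l0 ++ L''.tail, hpath, ?_, ?_⟩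
      · intro v hv
        rcases List.mem_cons.mp hv with rfl | hv
        · exact hmem v (Or.inl (mem_of_head?' hl0.2.1))
        · exact hmem v (Or.inr (hmem'' v hv))
      · unfold pathCost
        rw [hedges, List.map_append, List.sum_append]
        rw [edges_cons_cons, List.map_cons, List.sum_cons]
        show pathCost c l0 + pathCost c L'' = _
        rw [hl0c, hcost'']

/-- Splitting a path along a coarser path: the sum of the min-costs of the coarse edges
is at most the cost of the fine path. -/
lemma split_le (p : Fin n → Pt) (ε : ℝ) (c : Fin n → Fin n → ℝ) :
    ∀ (l' l : List (Fin n)),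
    l.Chain' (· < ·) → l'.Chain' (· < ·) → l.head? = l'.head? → l.getLast? = l'.getLast? →
    (∀ e ∈ edges l, err p e.1 e.2 ≤ ε) → (∀ v ∈ l', v ∈ l) →
    ((edges l').map (fun e => minCostR p ε c e.1 e.2)).sum ≤ pathCost c l
  | [], l, hc, hc', hh, hl, he, hm => by
      have : l = [] := by
        cases l with
        | nil => rfl
        | cons a t => simp at hh
      subst this; simp
  | [x], l, hc, hc', hh, hl, he, hm => by
      have hx : l = [x] := eq_single l hc x (by simpa using hh) (by simpa using hl)
      subst hx; simp
  | x :: y :: r, l, hc, hc', hh, hl, he, hm => by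
      simp only [List.head?_cons] at hh
      obtain ⟨t, rfl⟩ : ∃ t, l = x :: t := by
        cases l with
        | nil => simp at hh
        | cons a t => simp only [List.head?_cons, Option.some.injEq] at hh; exact ⟨t, by rw [hh]⟩
      obtain ⟨hxy, hc'2⟩ := List.isChain_cons_cons.mp hc'
      have hyl : y ∈ x :: t := hm y (by simp)
      have hyt : y ∈ t := by
        rcases List.mem_cons.mp hyl with h | h
        · exact absurd h.symm (ne_of_lt hxy)
        · exact h
      obtain ⟨t1, t2, rfl⟩ := List.append_of_mem hyt
      -- l = x :: (t1 ++ y :: t2) = ((x :: t1) ++ [y]) ++ t2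
      have hre : x :: (t1 ++ y :: t2) = ((x :: t1) ++ [y]) ++ t2 := by simp
      set l1 : List (Fin n) := (x :: t1) ++ [y] with hl1def
      have hl1last : l1.getLast? = some y := List.getLast?_concat
      have hsplit2 : x :: (t1 ++ y :: t2) = (x :: t1) ++ (y :: t2) := by simp
      have hcsplit : (x :: t1).Chain' (· < ·) ∧ (y :: t2).Chain' (· < ·) ∧
          ∀ a ∈ (x :: t1).getLast?, ∀ b ∈ (y :: t2).head?, a < b := by
        rw [hsplit2] at hc
        exact List.isChain_append.mp hc
      have hc1 : l1.Chain' (· < ·) := by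
        rw [hl1def]; change List.IsChain _ _; rw [List.isChain_append]
        refine ⟨hcsplit.1, by simp, ?_⟩
        intro a ha b hb
        simp only [List.head?_cons, Option.mem_def, Option.some.injEq] at hb
        subst hb
        exact hcsplit.2.2 a ha y rfl
      have hedgesl : edges (x :: (t1 ++ y :: t2)) = edges l1 ++ edges (y :: t2) := by
        rw [hre]
        exact edges_append l1 y t2 hl1last
      have hpc : pathCost c (x :: (t1 ++ y :: t2)) = pathCost c l1 + pathCost c (y :: t2) := by
        rw [hre]
        exact pathCost_append c t2 hl1last
      -- l1 is a path from x to y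
      have hl1head : l1.head? = some x := by rw [hl1def]; simp
      have hl1path : IsPath p ε x y l1 :=
        ⟨hc1, hl1head, hl1last, fun e hee => he e (by rw [hedgesl]; exact List.mem_append_left _ hee)⟩
      have h1 : minCostR p ε c x y ≤ pathCost c l1 := minCostR_le p ε c hl1path
      -- recursive step on (y :: r) vs (y :: t2)
      have hlast2 : (y :: t2).getLast? = (y :: r).getLast? := by
        cases t2 with
        | nil =>
            have : (x :: (t1 ++ y :: [])).getLast? = some y := by
              rw [hre]; simpa using hl1last
            rw [this] at hl
            simp only [List.getLast?_singleton]
            rw [List.getLast?_cons_cons] at hl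
            exact hl.symm ▸ rfl
        | cons b' t2' =>
            rw [List.getLast?_cons_cons]
            have h2 : (x :: (t1 ++ y :: b' :: t2')).getLast? = (b' :: t2').getLast? := by
              rw [hre, List.getLast?_append_of_ne_nil _ (by simp)]
            rw [h2] at hl
            rw [List.getLast?_cons_cons] at hl
            exact hl
      have hmem2 : ∀ v ∈ y :: r, v ∈ y :: t2 := by
        intro v hv
        rcases List.mem_cons.mp hv with rfl | hv
        · simp
        · have hvl : v ∈ x :: (t1 ++ y :: t2) := hm v (List.mem_cons_of_mem _ (List.mem_cons_of_mem _ hv))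
          have hyv : y < v := List.rel_of_pairwise_cons (List.isChain_iff_pairwise.mp hc'2) hv
          rcases (by rw [hre] at hvl; exact List.mem_append.mp hvl : v ∈ l1 ∨ v ∈ t2) with h | h
          · have : v ≤ y := le_getLast l1 hc1 y hl1last v h
            exact absurd (lt_of_lt_of_le hyv this) (lt_irrefl y)
          · exact List.mem_cons_of_mem _ h
      have h2 : ((edges (y :: r)).map (fun e => minCostR p ε c e.1 e.2)).sum
          ≤ pathCost c (y :: t2) :=
        split_le p ε c (y :: r) (y :: t2) hcsplit.2.1 hc'2 rfl hlast2
          (fun e hee => he e (by rw [hedgesl]; exact List.mem_append_right _ hee)) hmem2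
      rw [edges_cons_cons, List.map_cons, List.sum_cons, hpc]
      exact add_le_add h1 h2
termination_by l' _ => l'.length

lemma edges_lt : ∀ (l : List (Fin n)), l.Chain' (· < ·) → ∀ e ∈ edges l, e.1 < e.2
  | [], _, e, he => by simp at he
  | [a], _, e, he => by simp at he
  | a :: b :: t, hc, e, he => by
      rw [edges_cons_cons] at he
      rcases List.mem_cons.mp he with rfl | he
      · exact (List.isChain_cons_cons.mp hc).1
      · exact edges_lt (b :: t) (List.isChain_cons_cons.mp hc).2 e he

lemma sum_map_const {β : Type*} (l : List β) (r : ℝ) :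
    (l.map (fun _ => r)).sum = (l.length : ℝ) * r := by
  induction l with
  | nil => simp
  | cons a t ih => simp [ih]; ring

lemma edges_length_cast {l : List (Fin n)} (h : l ≠ []) :
    ((edges l).length : ℝ) = (l.length : ℝ) - 1 := by
  have h1 : 1 ≤ l.length := List.length_pos_iff.mpr h
  rw [edges_length l, Nat.cast_sub h1]
  simp

lemma ne_nil_of_head? {l : List (Fin n)} {x : Fin n} (h : l.head? = some x) : l ≠ [] := by
  cases l with
  | nil => simp at h
  | cons a t => simp

end PAux

/-- The minimum weighted `c_w m`-cost of an `ε m`-simplification equals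
the minimum of `Σ_{k=1}^m w k * (|S k| - 1)` over all progressive simplifications, and
the minimum weighted cumulative size `Σ_{k=1}^m w k * |S k|` equals `Σ_{k=1}^m w k`
plus the former minimum. -/
theorem weighted_min_cost_eq_min_progressive {n m : ℕ} (hn : 2 ≤ n) (hm : 1 ≤ m)
    (p : Fin n → Pt)
    (ε : ℕ → ℝ) (hε1 : 0 < ε 1)
    (hεmono : ∀ k, 1 ≤ k → k < m → ε k < ε (k + 1))
    (w : ℕ → ℝ) (hw : ∀ k, 1 ≤ k → k ≤ m → 0 ≤ w k)
    (cw : ℕ → Fin n → Fin n → ℝ)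
    (hc1 : ∀ i j : Fin n, i < j → err p i j ≤ ε 1 → cw 1 i j = w 1)
    (hck : ∀ k, 2 ≤ k → k ≤ m → ∀ i j : Fin n, i < j → err p i j ≤ ε k →
      cw k i j = w k + minCostR p (ε (k - 1)) (cw (k - 1)) i j) :
    minCostR p (ε m) (cw m) (⟨0, by omega⟩ : Fin n) (⟨n - 1, by omega⟩ : Fin n) =
      sInf {s : ℝ | ∃ S : ℕ → List (Fin n),
        ProgSimp p m ε (⟨0, by omega⟩ : Fin n) (⟨n - 1, by omega⟩ : Fin n) S ∧
        ∑ k ∈ Finset.Icc 1 m, w k * (((S k).length : ℝ) - 1) = s} ∧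
    sInf {s : ℝ | ∃ S : ℕ → List (Fin n),
        ProgSimp p m ε (⟨0, by omega⟩ : Fin n) (⟨n - 1, by omega⟩ : Fin n) S ∧
        ∑ k ∈ Finset.Icc 1 m, w k * ((S k).length : ℝ) = s} =
      (∑ k ∈ Finset.Icc 1 m, w k) +
        minCostR p (ε m) (cw m) (⟨0, by omega⟩ : Fin n) (⟨n - 1, by omega⟩ : Fin n) := by
  have hv0 : 0 < n := by omega
  have hv1 : n - 1 < n := by omega
  set v0 : Fin n := ⟨0, hv0⟩ with hv0def
  set v1 : Fin n := ⟨n - 1, hv1⟩ with hv1def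
  have hv01 : v0 ≤ v1 := by simp [hv0def, hv1def, Fin.le_def]
  -- positivity of tolerances
  have εpos : ∀ k, 1 ≤ k → k ≤ m → 0 < ε k := by
    intro k hk
    induction k, hk using Nat.le_induction with
    | base => intro _; exact hε1
    | succ k hk ih => intro hkm; exact (ih (by omega)).trans (hεmono k hk (by omega))
  -- cost of a path at level 1
  have hcost1 : ∀ (L : List (Fin n)) (i j : Fin n), IsPath p (ε 1) i j L →
      pathCost (cw 1) L = w 1 * ((edges L).length : ℝ) := by
    intro L i j hL
    unfold pathCost
    rw [List.map_congr_left
      (fun e he => hc1 e.1 e.2 (PAux.edges_lt L hL.1 e he) (hL.2.2.2 e he))]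
    rw [PAux.sum_map_const]
    ring
  -- cost of a path at level k ≥ 2
  have hcostk : ∀ k, 2 ≤ k → k ≤ m → ∀ (L : List (Fin n)) (i j : Fin n), IsPath p (ε k) i j L →
      pathCost (cw k) L = w k * ((edges L).length : ℝ) +
        ((edges L).map (fun e => minCostR p (ε (k - 1)) (cw (k - 1)) e.1 e.2)).sum := by
    intro k hk2 hkm L i j hL
    unfold pathCost
    rw [List.map_congr_left (l := edges L) (f := fun e => cw k e.1 e.2)
      (g := fun e => w k + minCostR p (ε (k - 1)) (cw (k - 1)) e.1 e.2)
      (fun (e : Fin n × Fin n) he => hck k hk2 hkm e.1 e.2 (PAux.edges_lt L hL.1 e he) (hL.2.2.2 e he))]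
    rw [List.sum_map_add, PAux.sum_map_const]
    ring
  -- upper bound: any progressive simplification dominates the min cost
  have UB : ∀ S, ProgSimp p m ε v0 v1 S → ∀ k, 1 ≤ k → k ≤ m →
      pathCost (cw k) (S k) ≤ ∑ j ∈ Finset.Icc 1 k, w j * (((S j).length : ℝ) - 1) := by
    intro S hS k hk
    induction k, hk using Nat.le_induction with
    | base =>
        intro h1m
        have hP := hS.1 1 le_rfl h1m
        rw [hcost1 _ _ _ hP, PAux.edges_length_cast (PAux.ne_nil_of_head? hP.2.1),
          Finset.Icc_self, Finset.sum_singleton]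
    | succ k hk ih =>
        intro hkm
        have hP := hS.1 (k + 1) (by omega) hkm
        have hPk := hS.1 k hk (by omega)
        rw [hcostk (k + 1) (by omega) hkm _ _ _ hP]
        simp only [Nat.add_sub_cancel]
        have hsplit : ((edges (S (k+1))).map
            (fun e => minCostR p (ε k) (cw k) e.1 e.2)).sum ≤ pathCost (cw k) (S k) :=
          PAux.split_le p (ε k) (cw k) (S (k+1)) (S k) hPk.1 hP.1
            (hPk.2.1.trans hP.2.1.symm) (hPk.2.2.1.trans hP.2.2.1.symm)
            hPk.2.2.2 (hS.2 k hk (by omega))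
        have hih := ih (by omega)
        rw [Finset.sum_Icc_succ_top (by omega)]
        rw [PAux.edges_length_cast (PAux.ne_nil_of_head? hP.2.1)]
        linarith
  -- lower bound: any path yields a progressive simplification of no larger weight
  have LB : ∀ k, 1 ≤ k → k ≤ m → ∀ L, IsPath p (ε k) v0 v1 L →
      ∃ S : ℕ → List (Fin n), ProgSimp p k ε v0 v1 S ∧ S k = L ∧
        ∑ j ∈ Finset.Icc 1 k, w j * (((S j).length : ℝ) - 1) ≤ pathCost (cw k) L := by
    intro k hk
    induction k, hk using Nat.le_induction with
    | base =>
        intro h1m L hL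
        refine ⟨fun _ => L, ⟨fun j hj1 hj2 => ?_, fun j h1 h2 => absurd h2 (by omega)⟩, rfl, ?_⟩
        · have : j = 1 := by omega
          subst this; exact hL
        · rw [hcost1 L _ _ hL, Finset.Icc_self, Finset.sum_singleton,
            PAux.edges_length_cast (PAux.ne_nil_of_head? hL.2.1)]
    | succ k hk ih =>
        intro hk1m L hL
        have hkm : k ≤ m := by omega
        have hεk : 0 < ε k := εpos k hk hkm
        obtain ⟨L', hL'path, hL'mem, hL'cost⟩ :=
          PAux.refine_exists p (ε k) (cw k) L v0 v1 hL.1 hL.2.1 hL.2.2.1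
            (fun e he => PAux.isPath_of_consec p hεk.le e.1 e.2 (le_of_lt (PAux.edges_lt _ hL.1 e he)))
        obtain ⟨S', hS'prog, hS'k, hS'sum⟩ := ih hkm L' hL'path
        refine ⟨fun j => if j = k + 1 then L else S' j, ⟨?_, ?_⟩, by simp, ?_⟩
        · intro j hj1 hj2
          by_cases hj : j = k + 1
          · subst hj; simpa using hL
          · simp only [if_neg hj]
            exact hS'prog.1 j hj1 (by omega)
        · intro j hj1 hj2
          by_cases hj : j = k
          · subst hj
            simp only [if_pos rfl, if_neg (by omega : ¬ j = j + 1)]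
            rw [hS'k]
            exact hL'mem
          · simp only [if_neg (by omega : ¬ j + 1 = k + 1), if_neg (by omega : ¬ j = k + 1)]
            exact hS'prog.2 j hj1 (by omega)
        · rw [Finset.sum_Icc_succ_top (by omega : 1 ≤ k + 1)]
          simp only [↓reduceIte]
          rw [Finset.sum_congr rfl (fun j hj => by
            rw [if_neg (by have := Finset.mem_Icc.mp hj; omega : ¬ j = k + 1)])]
          rw [hcostk (k + 1) (by omega) hk1m L _ _ hL]
          simp only [Nat.add_sub_cancel]
          rw [← hL'cost, PAux.edges_length_cast (PAux.ne_nil_of_head? hL.2.1)]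
          linarith
  -- the three sets
  have hAfin := PAux.costSet_finite p (ε m) (cw m) v0 v1
  obtain ⟨l₀, hl₀⟩ := PAux.isPath_of_consec p (εpos m hm le_rfl).le v0 v1 hv01
  have hAne : {s : ℝ | ∃ l, IsPath p (ε m) v0 v1 l ∧ pathCost (cw m) l = s}.Nonempty :=
    ⟨_, l₀, hl₀, rfl⟩
  obtain ⟨l₁, hc₁, hh₁, hg₁, he₁⟩ := PAux.consec_path p ((v1 : ℕ) - (v0 : ℕ)) v0 v1 rfl hv01
  have hS₀ : ProgSimp p m ε v0 v1 (fun _ => l₁) := by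
    refine ⟨fun k hk1 hk2 => ⟨hc₁, hh₁, hg₁, fun e hee => ?_⟩, fun k _ _ v hv => hv⟩
    rw [he₁ e hee]
    exact (εpos k hk1 hk2).le
  have hBne : {s : ℝ | ∃ S : ℕ → List (Fin n), ProgSimp p m ε v0 v1 S ∧
      ∑ k ∈ Finset.Icc 1 m, w k * (((S k).length : ℝ) - 1) = s}.Nonempty :=
    ⟨_, fun _ => l₁, hS₀, rfl⟩
  have hB'ne : {s : ℝ | ∃ S : ℕ → List (Fin n), ProgSimp p m ε v0 v1 S ∧
      ∑ k ∈ Finset.Icc 1 m, w k * ((S k).length : ℝ) = s}.Nonempty :=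
    ⟨_, fun _ => l₁, hS₀, rfl⟩
  have hBlb : ∀ b ∈ {s : ℝ | ∃ S : ℕ → List (Fin n), ProgSimp p m ε v0 v1 S ∧
      ∑ k ∈ Finset.Icc 1 m, w k * (((S k).length : ℝ) - 1) = s}, (0:ℝ) ≤ b := by
    rintro b ⟨S, hS, rfl⟩
    apply Finset.sum_nonneg
    intro j hj
    obtain ⟨hj1, hj2⟩ := Finset.mem_Icc.mp hj
    have hne : S j ≠ [] := PAux.ne_nil_of_head? (hS.1 j hj1 hj2).2.1
    have h1 : 1 ≤ (S j).length := List.length_pos_iff.mpr hne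
    have : (1:ℝ) ≤ ((S j).length : ℝ) := by exact_mod_cast h1
    have := hw j hj1 hj2
    nlinarith
  have hB'lb : ∀ b ∈ {s : ℝ | ∃ S : ℕ → List (Fin n), ProgSimp p m ε v0 v1 S ∧
      ∑ k ∈ Finset.Icc 1 m, w k * ((S k).length : ℝ) = s}, (0:ℝ) ≤ b := by
    rintro b ⟨S, hS, rfl⟩
    apply Finset.sum_nonneg
    intro j hj
    obtain ⟨hj1, hj2⟩ := Finset.mem_Icc.mp hj
    exact mul_nonneg (hw j hj1 hj2) (by positivity)
  have hBbdd : BddBelow {s : ℝ | ∃ S : ℕ → List (Fin n), ProgSimp p m ε v0 v1 S ∧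
      ∑ k ∈ Finset.Icc 1 m, w k * (((S k).length : ℝ) - 1) = s} := ⟨0, hBlb⟩
  have hB'bdd : BddBelow {s : ℝ | ∃ S : ℕ → List (Fin n), ProgSimp p m ε v0 v1 S ∧
      ∑ k ∈ Finset.Icc 1 m, w k * ((S k).length : ℝ) = s} := ⟨0, hB'lb⟩
  have first : minCostR p (ε m) (cw m) v0 v1 =
      sInf {s : ℝ | ∃ S : ℕ → List (Fin n), ProgSimp p m ε v0 v1 S ∧
        ∑ k ∈ Finset.Icc 1 m, w k * (((S k).length : ℝ) - 1) = s} := by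
    apply le_antisymm
    · apply le_csInf hBne
      rintro b ⟨S, hS, rfl⟩
      exact (PAux.minCostR_le p (ε m) (cw m) (hS.1 m hm le_rfl)).trans (UB S hS m hm le_rfl)
    · apply le_csInf hAne
      rintro a ⟨L, hL, rfl⟩
      obtain ⟨S, hS, -, hsum⟩ := LB m hm le_rfl L hL
      exact (csInf_le hBbdd ⟨S, hS, rfl⟩).trans hsum
  have key : ∀ S : ℕ → List (Fin n),
      ∑ k ∈ Finset.Icc 1 m, w k * ((S k).length : ℝ) =
      (∑ k ∈ Finset.Icc 1 m, w k) +
        ∑ k ∈ Finset.Icc 1 m, w k * (((S k).length : ℝ) - 1) := by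
    intro S
    rw [← Finset.sum_add_distrib]
    exact Finset.sum_congr rfl (fun j _ => by ring)
  refine ⟨first, ?_⟩
  rw [first]
  apply le_antisymm
  · have h2 : sInf {s : ℝ | ∃ S : ℕ → List (Fin n), ProgSimp p m ε v0 v1 S ∧
        ∑ k ∈ Finset.Icc 1 m, w k * ((S k).length : ℝ) = s}
        - (∑ k ∈ Finset.Icc 1 m, w k) ≤
        sInf {s : ℝ | ∃ S : ℕ → List (Fin n), ProgSimp p m ε v0 v1 S ∧
        ∑ k ∈ Finset.Icc 1 m, w k * (((S k).length : ℝ) - 1) = s} := by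
      apply le_csInf hBne
      rintro b ⟨S, hS, rfl⟩
      have h3 := csInf_le hB'bdd (⟨S, hS, key S⟩ : ((∑ k ∈ Finset.Icc 1 m, w k) +
        ∑ k ∈ Finset.Icc 1 m, w k * (((S k).length : ℝ) - 1)) ∈
        {s : ℝ | ∃ S : ℕ → List (Fin n), ProgSimp p m ε v0 v1 S ∧
        ∑ k ∈ Finset.Icc 1 m, w k * ((S k).length : ℝ) = s})
      linarith
    linarith
  · apply le_csInf hB'ne
    rintro b' ⟨S, hS, rfl⟩
    have h := csInf_le hBbdd ⟨S, hS, rfl⟩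
    rw [key S]
    linarith
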